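/- Let x, y ∈ ℝ^d with x = (x̄, |x̄|²) and y = (ȳ, |ȳ|²) on the paraboloid, x̄, ȳ ∈ [1,2]^{d-1}. Then x·y = t if and only if |ȳ/|ȳ| + 2|ȳ| x̄|² = 1 + 4t. Consequently, the dot-product set Π(E) = {x·y : x, y ∈ E} of a set E on the paraboloid with base E' ⊆ [1,2]^{d-1} has the same Hausdorff dimension as Φ(E', E'), where Φ(x̄, ȳ) = |ȳ/|ȳ| + 2|ȳ| x̄|². -/

import Mathlib

open scoped InnerProductSpace
open MeasureTheory

/-- The graph map onto the paraboloid: `x̄ ↦ (x̄, |x̄|²)`. -/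
noncomputable def liftPar (n : ℕ) (x : EuclideanSpace ℝ (Fin n)) :
    EuclideanSpace ℝ (Fin (n + 1)) := WithLp.toLp 2 (Fin.snoc x.ofLp (‖x‖ ^ 2))

/-- The map `Φ(x̄,ȳ) = |ȳ/|ȳ| + 2|ȳ|x̄|²`. -/
noncomputable def PhiMap (n : ℕ) (x y : EuclideanSpace ℝ (Fin n)) : ℝ :=
  ‖(‖y‖⁻¹ • y) + (2 * ‖y‖) • x‖ ^ 2

lemma inner_liftPar (n : ℕ) (x y : EuclideanSpace ℝ (Fin n)) :
    ⟪liftPar n x, liftPar n y⟫_ℝ = ⟪x, y⟫_ℝ + ‖x‖ ^ 2 * ‖y‖ ^ 2 := by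
  simp only [liftPar, PiLp.inner_apply, RCLike.inner_apply, starRingEnd_apply, star_trivial]
  rw [Fin.sum_univ_castSucc]
  simp [Fin.snoc_castSucc, Fin.snoc_last]
  ring

lemma phi_eq (n : ℕ) (x y : EuclideanSpace ℝ (Fin n)) (hy : y ≠ 0) :
    PhiMap n x y = 1 + 4 * ⟪liftPar n x, liftPar n y⟫_ℝ := by
  have hny : (0:ℝ) < ‖y‖ := norm_pos_iff.mpr hy
  rw [inner_liftPar, PhiMap, norm_add_sq_real, real_inner_smul_left, real_inner_smul_right]
  rw [norm_smul, norm_smul, real_inner_comm y x]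
  rw [Real.norm_eq_abs, Real.norm_eq_abs, abs_of_nonneg (by positivity),
    abs_of_nonneg (by positivity : (0:ℝ) ≤ 2 * ‖y‖)]
  field_simp
  ring

lemma dimH_affine_image (s : Set ℝ) :
    dimH ((fun t : ℝ => 1 + 4 * t) '' s) = dimH s := by
  have hf : LipschitzWith 4 (fun t : ℝ => 1 + 4 * t) :=
    LipschitzWith.of_dist_le_mul fun a b => by
      simp only [Real.dist_eq]
      rw [show (1 + 4*a) - (1 + 4*b) = 4*(a-b) by ring, abs_mul]
      norm_num
  have hg : LipschitzWith 1 (fun t : ℝ => (t - 1) / 4) :=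
    LipschitzWith.of_dist_le_mul fun a b => by
      simp only [Real.dist_eq]
      rw [show (a-1)/4 - (b-1)/4 = (a-b)/4 by ring, abs_div]
      rw [abs_of_nonneg (by norm_num : (0:ℝ) ≤ 4)]
      have := abs_nonneg (a - b)
      push_cast
      linarith
  refine le_antisymm (hf.dimH_image_le s) ?_
  have h1 : (fun t : ℝ => (t - 1) / 4) '' ((fun t : ℝ => 1 + 4 * t) '' s) = s := by
    rw [Set.image_image]
    have : (fun x : ℝ => (1 + 4 * x - 1) / 4) = id := by funext x; simp only [id]; ring
    rw [this, Set.image_id]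
  calc dimH s = dimH ((fun t : ℝ => (t - 1) / 4) '' ((fun t : ℝ => 1 + 4 * t) '' s)) := by rw [h1]
  _ ≤ dimH ((fun t : ℝ => 1 + 4 * t) '' s) := hg.dimH_image_le _

/-- For points on the paraboloid with bases in `[1,2]^{d-1}` (here `n = d-1`),
`x·y = t ↔ Φ(x̄,ȳ) = 1 + 4t`; consequently the dot-product set of a set on the
paraboloid has the same Hausdorff dimension as `Φ(E',E')`. -/
theorem dot_iff_phi_and_dimH (n : ℕ) (hn : 2 ≤ n) :
    (∀ (x y : EuclideanSpace ℝ (Fin n)) (t : ℝ),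
      (∀ j, x j ∈ Set.Icc (1 : ℝ) 2) → (∀ j, y j ∈ Set.Icc (1 : ℝ) 2) →
      (⟪liftPar n x, liftPar n y⟫_ℝ = t ↔ PhiMap n x y = 1 + 4 * t)) ∧
    ∀ E' : Set (EuclideanSpace ℝ (Fin n)),
      (∀ x ∈ E', ∀ j, x j ∈ Set.Icc (1 : ℝ) 2) →
      dimH {t : ℝ | ∃ x ∈ E', ∃ y ∈ E', ⟪liftPar n x, liftPar n y⟫_ℝ = t} =
        dimH (Set.image2 (PhiMap n) E' E') := by
  have hne : ∀ y : EuclideanSpace ℝ (Fin n), (∀ j, y j ∈ Set.Icc (1 : ℝ) 2) → y ≠ 0 := by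
    intro y hy h
    have hpos : (0:ℕ) < n := by omega
    have h1 := (hy ⟨0, hpos⟩).1
    rw [h] at h1
    simp at h1
    linarith [h1]
  constructor
  · intro x y t _ hy
    rw [phi_eq n x y (hne y hy)]
    constructor
    · intro h; linarith
    · intro h; linarith
  · intro E' hE'
    have hset : {t : ℝ | ∃ x ∈ E', ∃ y ∈ E', ⟪liftPar n x, liftPar n y⟫_ℝ = t} =
        Set.image2 (fun x y => ⟪liftPar n x, liftPar n y⟫_ℝ) E' E' := by
      ext t
      simp [Set.mem_image2]
    have himg : Set.image2 (PhiMap n) E' E' =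
        (fun t : ℝ => 1 + 4 * t) '' Set.image2 (fun x y => ⟪liftPar n x, liftPar n y⟫_ℝ) E' E' := by
      rw [Set.image_image2]
      apply Set.image2_congr
      intro x hx y hy
      exact phi_eq n x y (hne y (hE' y hy))
    rw [hset, himg, dimH_affine_image]
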